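/- Let G=(V,E) be a correlation clustering instance and β,λ∈(0,1) with 8β+λ ≤ 3/8. Let F be the partition of V into connected components of G̃=(V,E_G̃), and let G_2 be the instance obtained from G by turning into a neutral pair every +edge uv∈E whose endpoints lie in different parts of F (neutral pairs incur no disagreement under any clustering; the −edges of G_2 are the −edges of G). Let 𝒞* be a clustering minimizing cost^k_{·}(G_2) over all clusterings of V. Then the pre-clustering F satisfies cost^k_F(G_2) ≤ 7·cost^k_{𝒞*}(G_2). -/
import Mathlib


open Finset

attribute [local instance] Classical.propDecidable

noncomputable section

variable {V : Type*}

/-- The neighborhood of `u` in the graph of `+`edges `E` (contains `u` itself,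
since `E` contains all self-loops). -/
def Nbr [Fintype V] (E : V → V → Prop) (u : V) : Finset V :=
  Finset.univ.filter (fun v => E u v)

/-- The degree `d(u) = |N(u)|`. -/
def deg [Fintype V] (E : V → V → Prop) (u : V) : ℕ := (Nbr E u).card

/-- `M_{uv} = max (d(u), d(v))`. -/
def Mdeg [Fintype V] (E : V → V → Prop) (u v : V) : ℕ := max (deg E u) (deg E v)

/-- The pruned edge set `E_H = {uv ∈ E : |N(u) Δ N(v)| ≤ β · M_{uv}}`. -/
def EH [Fintype V] (β : ℝ) (E : V → V → Prop) (u v : V) : Prop :=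
  E u v ∧ ((symmDiff (Nbr E u) (Nbr E v)).card : ℝ) ≤ β * (Mdeg E u v : ℝ)

/-- The neighborhood of `u` in the pruned graph `H`. -/
def NH [Fintype V] (β : ℝ) (E : V → V → Prop) (u : V) : Finset V :=
  Finset.univ.filter (fun v => EH β E u v)

/-- The fractional solution: `x_{uu} = 0` and
`x_{uv} = 1 − |N_H(u) ∩ N_H(v)| / M_{uv}` for `u ≠ v`. -/
def xval [Fintype V] (β : ℝ) (E : V → V → Prop) (u v : V) : ℝ :=
  if u = v then 0 else 1 - ((NH β E u ∩ NH β E v).card : ℝ) / (Mdeg E u v : ℝ)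

/-- `cost_𝒞(u)`: the number of pairs incident to `u` in disagreement with respect
to the clustering `C` (given as a labelling function). -/
def costC [Fintype V] {α : Type*} (E : V → V → Prop) (C : V → α) (u : V) : ℕ :=
  (Finset.univ.filter
    (fun v => (E u v ∧ C u ≠ C v) ∨ (¬ E u v ∧ v ≠ u ∧ C u = C v))).card

/-- The top-`k` norm `cost^k_𝒞` of the disagreement vector of the clustering `C`:
the maximum of `∑_{u ∈ T} cost_𝒞(u)` over subsets `T ⊆ V` of size `k`. -/
def costTopK [Fintype V] {α : Type*} (E : V → V → Prop) (C : V → α) (k : ℕ) : ℕ :=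
  (Finset.powersetCard k (Finset.univ : Finset V)).sup (fun T => ∑ u ∈ T, costC E C u)

/-- `d_H(u)`: the degree of `u` in the pruned graph `H`. -/
def dH [Fintype V] (β : ℝ) (E : V → V → Prop) (u : V) : ℕ := (NH β E u).card

/-- A vertex is heavy if it keeps at least a `(1−λ)` fraction of its neighbours in `H`
(i.e. it is not light: `d_H(v) ≥ (1−λ)·d(v)`). -/
def Heavy [Fintype V] (β lam : ℝ) (E : V → V → Prop) (v : V) : Prop :=
  (1 - lam) * (deg E v : ℝ) ≤ (dH β E v : ℝ)

/-- The edge set `E_G̃ = {uv ∈ E_H : u or v is heavy}`. -/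
def EGt [Fintype V] (β lam : ℝ) (E : V → V → Prop) (u v : V) : Prop :=
  EH β E u v ∧ (Heavy β lam E u ∨ Heavy β lam E v)

/-- The graph `G̃ = (V, E_G̃)`. -/
def Gtilde [Fintype V] (β lam : ℝ) (E : V → V → Prop) : SimpleGraph V :=
  SimpleGraph.fromRel (fun u v => EGt β lam E u v)

/-- The pre-clustering `F`: the partition of `V` into connected components of `G̃`,
given by the map sending each vertex to its connected component. -/
def preCluster [Fintype V] (β lam : ℝ) (E : V → V → Prop) :
    V → (Gtilde β lam E).ConnectedComponent :=
  fun v => (Gtilde β lam E).connectedComponentMk v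

/-- The disagreement of `u` under clustering `D` in the modified instance `G₂`, where
every `+`edge whose endpoints lie in different parts of `F` has been made neutral:
`cost_D(G₂,u) = |{v : uv∈E, F(u)=F(v), D(u)≠D(v)}| + |{v≠u : uv∉E, D(u)=D(v)}|`. -/
def costC2 [Fintype V] {γ α : Type*} (E : V → V → Prop) (F : V → γ) (D : V → α)
    (u : V) : ℕ :=
  (Finset.univ.filter (fun v => E u v ∧ F u = F v ∧ D u ≠ D v)).card
    + (Finset.univ.filter (fun v => v ≠ u ∧ ¬ E u v ∧ D u = D v)).card

/-- The top-`k` norm of the disagreement vector of `D` in the modified instance `G₂`. -/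
def costTopK2 [Fintype V] {γ α : Type*} (E : V → V → Prop) (F : V → γ) (D : V → α)
    (k : ℕ) : ℕ :=
  (Finset.powersetCard k (Finset.univ : Finset V)).sup (fun T => ∑ u ∈ T, costC2 E F D u)

section Aux

variable [Fintype V] {E : V → V → Prop} {β lam : ℝ}

lemma mem_Nbr {u v : V} : v ∈ Nbr E u ↔ E u v := by simp [Nbr]

lemma self_mem_Nbr (hrefl : ∀ u, E u u) (u : V) : u ∈ Nbr E u := mem_Nbr.2 (hrefl u)

lemma deg_pos (hrefl : ∀ u, E u u) (u : V) : 0 < deg E u :=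
  Finset.card_pos.2 ⟨u, self_mem_Nbr hrefl u⟩

lemma EH_refl (hrefl : ∀ u, E u u) (hβ0 : 0 ≤ β) (u : V) : EH β E u u := by
  refine ⟨hrefl u, ?_⟩
  rw [symmDiff_self]
  simp only [Finset.bot_eq_empty, Finset.card_empty, Nat.cast_zero]
  positivity

lemma EH_symm (hsymm : ∀ u v, E u v → E v u) {u v : V} (h : EH β E u v) : EH β E v u := by
  refine ⟨hsymm _ _ h.1, ?_⟩
  rw [symmDiff_comm]
  rw [show Mdeg E v u = Mdeg E u v from max_comm _ _]
  exact h.2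

lemma mem_NH {u v : V} : v ∈ NH β E u ↔ EH β E u v := by simp [NH]

lemma NH_subset_Nbr {u : V} : NH β E u ⊆ Nbr E u := by
  intro v hv; exact mem_Nbr.2 ((mem_NH.1 hv).1)

lemma dH_le_deg {u : V} : dH β E u ≤ deg E u := Finset.card_le_card NH_subset_Nbr

/-- degree lower bound along an `E_H` edge -/
lemma EH_deg_lb (hβ1 : β < 1) {u v : V} (h : EH β E u v) :
    (1 - β) * (Mdeg E u v : ℝ) ≤ (deg E u : ℝ) := by
  rcases le_total (deg E v) (deg E u) with hd | hd
  · have : (Mdeg E u v : ℝ) = (deg E u : ℝ) := by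
      simp [Mdeg, max_eq_left hd]
    rw [this]
    have h0 : (0:ℝ) ≤ (deg E u : ℝ) := Nat.cast_nonneg _
    have hβ0 : (0:ℝ) ≤ β * (Mdeg E u v : ℝ) :=
      le_trans (Nat.cast_nonneg _) h.2
    nlinarith [h.2, Nat.cast_nonneg (α := ℝ) (Mdeg E u v)]
  · -- deg u ≤ deg v, so M = deg v and deg v ≤ deg u + |Δ|
    have hM : (Mdeg E u v : ℝ) = (deg E v : ℝ) := by simp [Mdeg, max_eq_right hd]
    have hsub : Nbr E v ⊆ Nbr E u ∪ (Nbr E v \ Nbr E u) := by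
      intro x hx
      by_cases hxu : x ∈ Nbr E u
      · exact Finset.mem_union_left _ hxu
      · exact Finset.mem_union_right _ (Finset.mem_sdiff.2 ⟨hx, hxu⟩)
    have hcard : deg E v ≤ deg E u + (Nbr E v \ Nbr E u).card := by
      calc deg E v ≤ (Nbr E u ∪ (Nbr E v \ Nbr E u)).card := Finset.card_le_card hsub
        _ ≤ _ := Finset.card_union_le _ _
    have hsd : (Nbr E v \ Nbr E u).card ≤ (symmDiff (Nbr E u) (Nbr E v)).card := by
      apply Finset.card_le_card
      rw [symmDiff_def]
      exact Finset.subset_union_right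
    have h1 : (deg E v : ℝ) ≤ (deg E u : ℝ) + β * (Mdeg E u v : ℝ) := by
      have := h.2
      have hc : ((Nbr E v \ Nbr E u).card : ℝ) ≤ ((symmDiff (Nbr E u) (Nbr E v)).card : ℝ) :=
        Nat.cast_le.2 hsd
      have hc2 : (deg E v : ℝ) ≤ (deg E u : ℝ) + ((Nbr E v \ Nbr E u).card : ℝ) := by
        exact_mod_cast hcard
      linarith
    rw [hM] at h1 ⊢
    linarith

/-- symmetric difference cardinal triangle inequality -/
lemma sd_triangle (a b c : V) :
    (symmDiff (Nbr E a) (Nbr E c)).card ≤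
      (symmDiff (Nbr E a) (Nbr E b)).card + (symmDiff (Nbr E b) (Nbr E c)).card := by
  calc (symmDiff (Nbr E a) (Nbr E c)).card
      ≤ (symmDiff (Nbr E a) (Nbr E b) ⊔ symmDiff (Nbr E b) (Nbr E c)).card :=
        Finset.card_le_card (symmDiff_triangle _ _ _)
    _ ≤ _ := Finset.card_union_le _ _

/-- "closeness" of two vertices -/
def CloseTo (β : ℝ) (E : V → V → Prop) (g h : V) : Prop :=
  (1 - β) * ((symmDiff (Nbr E g) (Nbr E h)).card : ℝ) ≤ β * ((deg E g : ℝ) + (deg E h : ℝ))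

lemma close_of_common (hβ0 : 0 ≤ β) (hβ1 : β < 1) {g h x : V}
    (hg : EH β E g x) (hh : EH β E h x) : CloseTo β E g h := by
  have t1 : ((symmDiff (Nbr E g) (Nbr E x)).card : ℝ) ≤ β * (Mdeg E g x : ℝ) := hg.2
  have t2 : ((symmDiff (Nbr E h) (Nbr E x)).card : ℝ) ≤ β * (Mdeg E h x : ℝ) := hh.2
  have m1 : (1 - β) * (Mdeg E g x : ℝ) ≤ (deg E g : ℝ) := EH_deg_lb hβ1 hg
  have m2 : (1 - β) * (Mdeg E h x : ℝ) ≤ (deg E h : ℝ) := EH_deg_lb hβ1 hh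
  have tri : ((symmDiff (Nbr E g) (Nbr E h)).card : ℝ) ≤
      ((symmDiff (Nbr E g) (Nbr E x)).card : ℝ) + ((symmDiff (Nbr E x) (Nbr E h)).card : ℝ) := by
    exact_mod_cast sd_triangle g x h
  have hxh : ((symmDiff (Nbr E x) (Nbr E h)).card : ℝ) = ((symmDiff (Nbr E h) (Nbr E x)).card : ℝ) := by
    rw [symmDiff_comm]
  rw [hxh] at tri
  have h1 : (1-β) * ((symmDiff (Nbr E g) (Nbr E x)).card : ℝ) ≤ β * (deg E g : ℝ) := by
    nlinarith [Nat.cast_nonneg (α := ℝ) (Mdeg E g x)]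
  have h2 : (1-β) * ((symmDiff (Nbr E h) (Nbr E x)).card : ℝ) ≤ β * (deg E h : ℝ) := by
    nlinarith [Nat.cast_nonneg (α := ℝ) (Mdeg E h x)]
  unfold CloseTo
  nlinarith [tri]

lemma card_nbr_inter_ge (m g h : V) :
    deg E m ≤ (Nbr E g ∩ Nbr E h).card
      + (symmDiff (Nbr E g) (Nbr E m)).card + (symmDiff (Nbr E m) (Nbr E h)).card := by
  have hsub : Nbr E m ⊆ (Nbr E g ∩ Nbr E h)
      ∪ symmDiff (Nbr E g) (Nbr E m) ∪ symmDiff (Nbr E m) (Nbr E h) := by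
    intro x hx
    by_cases hg : x ∈ Nbr E g
    · by_cases hh : x ∈ Nbr E h
      · exact Finset.mem_union_left _ (Finset.mem_union_left _ (Finset.mem_inter.2 ⟨hg, hh⟩))
      · refine Finset.mem_union_right _ ?_
        rw [symmDiff_def]
        exact Finset.mem_union_left _ (Finset.mem_sdiff.2 ⟨hx, hh⟩)
    · refine Finset.mem_union_left _ (Finset.mem_union_right _ ?_)
      rw [symmDiff_def]
      exact Finset.mem_union_right _ (Finset.mem_sdiff.2 ⟨hx, hg⟩)
  calc deg E m ≤ _ := Finset.card_le_card hsub
    _ ≤ _ := le_trans (Finset.card_union_le _ _)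
        (by exact Nat.add_le_add_right (Finset.card_union_le _ _) _)

lemma deg_le_of_sd (g m : V) :
    deg E g ≤ deg E m + (symmDiff (Nbr E g) (Nbr E m)).card := by
  have hsub : Nbr E g ⊆ Nbr E m ∪ (Nbr E g \ Nbr E m) := by
    intro x hx
    by_cases hm : x ∈ Nbr E m
    · exact Finset.mem_union_left _ hm
    · exact Finset.mem_union_right _ (Finset.mem_sdiff.2 ⟨hx, hm⟩)
  have h2 : (Nbr E g \ Nbr E m).card ≤ (symmDiff (Nbr E g) (Nbr E m)).card := by
    apply Finset.card_le_card; rw [symmDiff_def]; exact Finset.subset_union_left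
  calc deg E g ≤ _ := Finset.card_le_card hsub
    _ ≤ deg E m + (Nbr E g \ Nbr E m).card := Finset.card_union_le _ _
    _ ≤ _ := Nat.add_le_add_left h2 _

/-- transitivity of closeness through any middle vertex, for heavy endpoints -/
lemma close_trans (hrefl : ∀ u, E u u)
    (hβ0 : 0 < β) (hlam0 : 0 < lam) (hβlam : 8 * β + lam ≤ 3 / 8)
    {g h m : V} (hg : Heavy β lam E g) (hh : Heavy β lam E h)
    (c1 : CloseTo β E g m) (c2 : CloseTo β E m h) : CloseTo β E g h := by
  have hβ1 : β < 1 := by linarith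
  have hq1 : (1 - β) * ((symmDiff (Nbr E g) (Nbr E m)).card : ℝ)
      ≤ β * ((deg E g : ℝ) + (deg E m : ℝ)) := c1
  have hq2 : (1 - β) * ((symmDiff (Nbr E m) (Nbr E h)).card : ℝ)
      ≤ β * ((deg E m : ℝ) + (deg E h : ℝ)) := c2
  have hdg1 : (deg E g : ℝ) ≤ (deg E m : ℝ) + ((symmDiff (Nbr E g) (Nbr E m)).card : ℝ) := by
    exact_mod_cast deg_le_of_sd (E := E) g m
  have hdh1 : (deg E h : ℝ) ≤ (deg E m : ℝ) + ((symmDiff (Nbr E m) (Nbr E h)).card : ℝ) := by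
    have h2 : (deg E h : ℝ) ≤ (deg E m : ℝ) + ((symmDiff (Nbr E h) (Nbr E m)).card : ℝ) := by
      exact_mod_cast deg_le_of_sd (E := E) h m
    rwa [symmDiff_comm] at h2
  have hq1n : (0:ℝ) ≤ ((symmDiff (Nbr E g) (Nbr E m)).card : ℝ) := Nat.cast_nonneg _
  have hq2n : (0:ℝ) ≤ ((symmDiff (Nbr E m) (Nbr E h)).card : ℝ) := Nat.cast_nonneg _
  have hdm1 : (1:ℝ) ≤ (deg E m : ℝ) := by exact_mod_cast deg_pos hrefl m
  have hdgn : (0:ℝ) ≤ (deg E g : ℝ) := Nat.cast_nonneg _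
  have hdhn : (0:ℝ) ≤ (deg E h : ℝ) := Nat.cast_nonneg _
  have s1 : (1 - 2*β) * (deg E g : ℝ) ≤ (deg E m : ℝ) := by nlinarith
  have s2 : (1 - 2*β) * (deg E h : ℝ) ≤ (deg E m : ℝ) := by nlinarith
  have key : lam * (deg E g : ℝ) + lam * (deg E h : ℝ)
      + ((symmDiff (Nbr E g) (Nbr E m)).card : ℝ)
      + ((symmDiff (Nbr E m) (Nbr E h)).card : ℝ) < (deg E m : ℝ) := by
    have e1 : (1-2*β) * ((1-β) * (((symmDiff (Nbr E g) (Nbr E m)).card : ℝ)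
        + ((symmDiff (Nbr E m) (Nbr E h)).card : ℝ)))
        ≤ 2*β*(deg E m : ℝ) + 2*β*(1-2*β)*(deg E m : ℝ) := by
      nlinarith [s1, s2, hq1, hq2]
    have e2 : (1-2*β) * (lam * ((deg E g : ℝ) + (deg E h : ℝ)))
        ≤ 2 * lam * (deg E m : ℝ) := by
      nlinarith [s1, s2]
    nlinarith [e1, e2, hdm1]
  have hcnt' : (deg E m : ℝ) ≤ ((Nbr E g ∩ Nbr E h).card : ℝ)
      + ((symmDiff (Nbr E g) (Nbr E m)).card : ℝ)
      + ((symmDiff (Nbr E m) (Nbr E h)).card : ℝ) := by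
    exact_mod_cast card_nbr_inter_ge (E := E) m g h
  have hle1 : dH β E g ≤ deg E g := dH_le_deg
  have hle2 : dH β E h ≤ deg E h := dH_le_deg
  have hcover : (Nbr E g ∩ Nbr E h).card ≤ (NH β E g ∩ NH β E h).card
      + ((Nbr E g \ NH β E g).card + (Nbr E h \ NH β E h).card) := by
    have hsub : Nbr E g ∩ Nbr E h ⊆ (NH β E g ∩ NH β E h)
        ∪ (Nbr E g \ NH β E g) ∪ (Nbr E h \ NH β E h) := by
      intro x hx
      rcases Finset.mem_inter.1 hx with ⟨hxg, hxh⟩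
      by_cases h1 : x ∈ NH β E g
      · by_cases h2 : x ∈ NH β E h
        · exact Finset.mem_union_left _ (Finset.mem_union_left _ (Finset.mem_inter.2 ⟨h1, h2⟩))
        · exact Finset.mem_union_right _ (Finset.mem_sdiff.2 ⟨hxh, h2⟩)
      · exact Finset.mem_union_left _ (Finset.mem_union_right _ (Finset.mem_sdiff.2 ⟨hxg, h1⟩))
    calc (Nbr E g ∩ Nbr E h).card ≤ _ := Finset.card_le_card hsub
      _ ≤ (NH β E g ∩ NH β E h).card + (Nbr E g \ NH β E g).card + (Nbr E h \ NH β E h).card :=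
        le_trans (Finset.card_union_le _ _)
          (Nat.add_le_add_right (Finset.card_union_le _ _) _)
      _ = _ := by omega
  have hsd1 : (Nbr E g \ NH β E g).card = deg E g - dH β E g :=
    Finset.card_sdiff_of_subset NH_subset_Nbr
  have hsd2 : (Nbr E h \ NH β E h).card = deg E h - dH β E h :=
    Finset.card_sdiff_of_subset NH_subset_Nbr
  rw [hsd1, hsd2] at hcover
  have hcover' : ((Nbr E g ∩ Nbr E h).card : ℝ) ≤ ((NH β E g ∩ NH β E h).card : ℝ)
      + (((deg E g : ℝ) - (dH β E g : ℝ)) + ((deg E h : ℝ) - (dH β E h : ℝ))) := by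
    have h1 : ((deg E g - dH β E g : ℕ) : ℝ) = (deg E g : ℝ) - (dH β E g : ℝ) :=
      by rw [Nat.cast_sub hle1]
    have h2 : ((deg E h - dH β E h : ℕ) : ℝ) = (deg E h : ℝ) - (dH β E h : ℝ) :=
      by rw [Nat.cast_sub hle2]
    calc ((Nbr E g ∩ Nbr E h).card : ℝ)
        ≤ ((NH β E g ∩ NH β E h).card : ℝ)
          + (((deg E g - dH β E g : ℕ) : ℝ) + ((deg E h - dH β E h : ℕ) : ℝ)) := by
          exact_mod_cast hcover
      _ = _ := by rw [h1, h2]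
  have hg' : (1 - lam) * (deg E g : ℝ) ≤ (dH β E g : ℝ) := hg
  have hh' : (1 - lam) * (deg E h : ℝ) ≤ (dH β E h : ℝ) := hh
  have hpos : (0:ℝ) < ((NH β E g ∩ NH β E h).card : ℝ) := by nlinarith
  have hne : (NH β E g ∩ NH β E h).Nonempty := by
    rw [← Finset.card_pos]
    exact_mod_cast hpos
  obtain ⟨x, hx⟩ := hne
  rcases Finset.mem_inter.1 hx with ⟨hx1, hx2⟩
  exact close_of_common hβ0.le hβ1 (mem_NH.1 hx1) (mem_NH.1 hx2)

lemma Gtilde_adj {u v : V} (hsymm : ∀ u v, E u v → E v u)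
    (h : (Gtilde β lam E).Adj u v) :
    EH β E u v ∧ (Heavy β lam E u ∨ Heavy β lam E v) := by
  rw [Gtilde, SimpleGraph.fromRel_adj] at h
  rcases h.2 with h2 | h2
  · exact ⟨h2.1, h2.2⟩
  · exact ⟨EH_symm hsymm h2.1, h2.2.symm⟩

lemma walk_close (hsymm : ∀ u v, E u v → E v u) (hrefl : ∀ u, E u u)
    (hβ0 : 0 < β) (hlam0 : 0 < lam) (hβlam : 8 * β + lam ≤ 3 / 8) :
    ∀ {a b : V}, (Gtilde β lam E).Walk a b → ∀ {g h : V},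
      Heavy β lam E g → Heavy β lam E h → EH β E g a → EH β E h b →
      CloseTo β E g h := by
  have hβ1 : β < 1 := by linarith
  intro a b w
  induction w with
  | nil =>
    intro g h hg hh hga hhb
    exact close_of_common hβ0.le hβ1 hga hhb
  | @cons a a₂ b hadj p ih =>
    intro g h hg hh hga hhb
    obtain ⟨hEH, hheav⟩ := Gtilde_adj (lam := lam) hsymm hadj
    rcases hheav with hm | hm
    · -- a is heavy
      have cgm : CloseTo β E g a := close_of_common hβ0.le hβ1 hga (EH_refl hrefl hβ0.le a)
      have cmh : CloseTo β E a h := ih hm hh hEH hhb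
      exact close_trans hrefl hβ0 hlam0 hβlam hg hh cgm cmh
    · -- a₂ is heavy
      have cgm : CloseTo β E g a₂ := close_of_common hβ0.le hβ1 hga (EH_symm hsymm hEH)
      have cmh : CloseTo β E a₂ h := ih hm hh (EH_refl hrefl hβ0.le a₂) hhb
      exact close_trans hrefl hβ0 hlam0 hβlam hg hh cgm cmh

/-- any two heavy vertices in the same component are close -/
lemma heavy_close (hsymm : ∀ u v, E u v → E v u) (hrefl : ∀ u, E u u)
    (hβ0 : 0 < β) (hlam0 : 0 < lam) (hβlam : 8 * β + lam ≤ 3 / 8)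
    {g h : V} (hcomp : preCluster β lam E g = preCluster β lam E h)
    (hg : Heavy β lam E g) (hh : Heavy β lam E h) : CloseTo β E g h := by
  have hreach : (Gtilde β lam E).Reachable g h := by
    rw [preCluster, preCluster] at hcomp
    exact (SimpleGraph.ConnectedComponent.eq).1 hcomp
  obtain ⟨w⟩ := hreach
  exact walk_close hsymm hrefl hβ0 hlam0 hβlam w hg hh
    (EH_refl hrefl hβ0.le g) (EH_refl hrefl hβ0.le h)

/-- every vertex in a non-trivial component has a heavy `E_H`-partner in the component -/
lemma exists_heavy_partner (hsymm : ∀ u v, E u v → E v u) (hrefl : ∀ u, E u u)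
    (hβ0 : 0 < β)
    {w w' : V} (hne : w' ≠ w) (hcomp : preCluster β lam E w = preCluster β lam E w') :
    ∃ m, Heavy β lam E m ∧ EH β E w m ∧ preCluster β lam E m = preCluster β lam E w := by
  have hreach : (Gtilde β lam E).Reachable w w' := by
    rw [preCluster, preCluster] at hcomp
    exact (SimpleGraph.ConnectedComponent.eq).1 hcomp
  obtain ⟨p⟩ := hreach
  cases p with
  | nil => exact absurd rfl hne.symm
  | @cons _ x _ hadj p' =>
    obtain ⟨hEH, hheav⟩ := Gtilde_adj (lam := lam) hsymm hadj
    have hxcomp : preCluster β lam E x = preCluster β lam E w := by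
      rw [preCluster, preCluster]
      exact ((SimpleGraph.ConnectedComponent.eq).2 hadj.reachable).symm
    rcases hheav with hm | hm
    · exact ⟨w, hm, EH_refl hrefl hβ0.le w, rfl⟩
    · exact ⟨x, hm, hEH, hxcomp⟩

/-- the numeric inequality behind the density lemma -/
lemma num_ineq (hβ0 : 0 < β) (hlam0 : 0 < lam) (hβlam : 8 * β + lam ≤ 3 / 8) :
    0 < (1-lam)*(1-β)*(1-2*β) - β*(3-2*β) ∧
    10*β*(1-2*β) ≤ (1-lam) * ((1-lam)*(1-β)*(1-2*β) - β*(3-2*β)) := by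
  have hβ64 : β < 3/64 := by linarith
  have hL : 5/8 + 8*β ≤ 1 - lam := by linarith
  have hL1 : 1 - lam < 1 := by linarith
  constructor
  · nlinarith [mul_pos hβ0 hβ0]
  · nlinarith [mul_pos hβ0 hβ0, sq_nonneg (1 - lam - 5/8 - 8*β),
      mul_nonneg (mul_nonneg hβ0.le hβ0.le) hβ0.le,
      mul_nonneg (sub_nonneg.2 hL) hβ0.le]

end Aux

/-- the component of `u`, as a finset -/
def Kset [Fintype V] (β lam : ℝ) (E : V → V → Prop) (u : V) : Finset V :=
  Finset.univ.filter (fun v => preCluster β lam E v = preCluster β lam E u)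

/-- the non-neighbours of `u` inside its component -/
def Aset [Fintype V] (β lam : ℝ) (E : V → V → Prop) (u : V) : Finset V :=
  Finset.univ.filter (fun v => ¬ E u v ∧ preCluster β lam E v = preCluster β lam E u)

section Aux2

variable [Fintype V] {E : V → V → Prop} {β lam : ℝ}

lemma mem_Kset {u v : V} : v ∈ Kset β lam E u ↔ preCluster β lam E v = preCluster β lam E u := by
  simp [Kset]

lemma mem_Aset {u v : V} :
    v ∈ Aset β lam E u ↔ ¬ E u v ∧ preCluster β lam E v = preCluster β lam E u := by
  simp [Aset]

lemma Aset_eq_sdiff (u : V) : Aset β lam E u = Kset β lam E u \ Nbr E u := by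
  ext v
  simp [Aset, Kset, Nbr, and_comm]

lemma self_mem_Kset (u : V) : u ∈ Kset β lam E u := mem_Kset.2 rfl

set_option maxHeartbeats 1000000 in
/-- **Density of components**: at most a fifth of the component of `u` consists of
non-neighbours of `u`. -/
lemma dens (hsymm : ∀ u v, E u v → E v u) (hrefl : ∀ u, E u u)
    (hβ0 : 0 < β) (hlam0 : 0 < lam) (hlam1 : lam < 1) (hβlam : 8 * β + lam ≤ 3 / 8)
    (u : V) : 5 * (Aset β lam E u).card ≤ (Kset β lam E u).card := by
  have hβ1 : β < 1 := by linarith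
  rcases (Aset β lam E u).eq_empty_or_nonempty with hA | hA
  · simp [hA]
  obtain ⟨v, hv⟩ := hA
  rw [mem_Aset] at hv
  have hvu : v ≠ u := fun h => hv.1 (h ▸ hrefl u)
  -- a heavy partner of u
  obtain ⟨m₀, hm₀H, hm₀EH, hm₀K⟩ :=
    exists_heavy_partner (lam := lam) hsymm hrefl hβ0 hvu hv.2.symm
  set S : Finset V := NH β E m₀ with hSdef
  set d : ℝ := (deg E m₀ : ℝ) with hddef
  have hd1 : (1:ℝ) ≤ d := by rw [hddef]; exact_mod_cast deg_pos hrefl m₀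
  have hScard_lb : (1 - lam) * d ≤ (S.card : ℝ) := hm₀H
  have hScard_ub : (S.card : ℝ) ≤ d := by
    rw [hSdef, hddef]
    exact_mod_cast Finset.card_le_card (NH_subset_Nbr (β := β) (u := m₀))
  have hSK : S ⊆ Kset β lam E u := by
    intro x hx
    have hEHx : EH β E m₀ x := mem_NH.1 hx
    rw [mem_Kset]
    by_cases hxm : x = m₀
    · rw [hxm]; exact hm₀K
    · have hadj : (Gtilde β lam E).Adj m₀ x := by
        rw [Gtilde, SimpleGraph.fromRel_adj]
        exact ⟨fun h => hxm h.symm, Or.inl ⟨hEHx, Or.inl hm₀H⟩⟩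
      have : preCluster β lam E x = preCluster β lam E m₀ := by
        rw [preCluster, preCluster]
        exact ((SimpleGraph.ConnectedComponent.eq).2 hadj.reachable).symm
      rw [this]; exact hm₀K
  -- closeness of u to m₀
  have hq4 : (1 - β) * ((symmDiff (Nbr E m₀) (Nbr E u)).card : ℝ) ≤ β * d := by
    have h1 : ((symmDiff (Nbr E u) (Nbr E m₀)).card : ℝ) ≤ β * (Mdeg E u m₀ : ℝ) := hm₀EH.2
    have h2 : (1 - β) * (Mdeg E m₀ u : ℝ) ≤ d := EH_deg_lb hβ1 (EH_symm hsymm hm₀EH)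
    have h3 : (Mdeg E u m₀ : ℝ) = (Mdeg E m₀ u : ℝ) := by
      rw [show Mdeg E u m₀ = Mdeg E m₀ u from max_comm _ _]
    rw [symmDiff_comm]
    rw [h3] at h1
    nlinarith [Nat.cast_nonneg (α := ℝ) (Mdeg E m₀ u)]
  set κ : ℝ := (1-lam)*(1-β)*(1-2*β) - β*(3-2*β) with hκdef
  -- the per-vertex lower bound
  have hkey : ∀ w ∈ Aset β lam E u, κ * d ≤ (1-β)*(1-2*β) * ((S ∩ Nbr E w).card : ℝ) := by
    intro w hw
    rw [mem_Aset] at hw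
    have hwu : w ≠ u := fun h => hw.1 (h ▸ hrefl u)
    obtain ⟨m, hmH, hmEH, hmK⟩ :=
      exists_heavy_partner (lam := lam) hsymm hrefl hβ0 (Ne.symm hwu) hw.2
    -- m and m₀ are heavy vertices in the same component, hence close
    have hclose : CloseTo β E m₀ m :=
      heavy_close hsymm hrefl hβ0 hlam0 hβlam (by rw [hm₀K, hmK, hw.2]) hm₀H hmH
    set q1 : ℝ := ((symmDiff (Nbr E m₀) (Nbr E m)).card : ℝ) with hq1def
    set q2 : ℝ := ((symmDiff (Nbr E m) (Nbr E w)).card : ℝ) with hq2def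
    set e : ℝ := (deg E m : ℝ) with hedef
    have hq1 : (1 - β) * q1 ≤ β * (d + e) := hclose
    have hq2 : (1 - β) * q2 ≤ β * e := by
      have h1 : ((symmDiff (Nbr E w) (Nbr E m)).card : ℝ) ≤ β * (Mdeg E w m : ℝ) := hmEH.2
      have h2 : (1 - β) * (Mdeg E m w : ℝ) ≤ e := EH_deg_lb hβ1 (EH_symm hsymm hmEH)
      have h3 : (Mdeg E w m : ℝ) = (Mdeg E m w : ℝ) := by
        rw [show Mdeg E w m = Mdeg E m w from max_comm _ _]
      rw [h3] at h1
      have h4 : q2 = ((symmDiff (Nbr E w) (Nbr E m)).card : ℝ) := by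
        rw [hq2def, symmDiff_comm]
      rw [h4]
      nlinarith [Nat.cast_nonneg (α := ℝ) (Mdeg E m w)]
    have he : e ≤ d + q1 := by
      have h2 : e ≤ d + ((symmDiff (Nbr E m) (Nbr E m₀)).card : ℝ) := by
        rw [hedef, hddef]
        exact_mod_cast deg_le_of_sd (E := E) m m₀
      rwa [symmDiff_comm] at h2
    -- counting: S is mostly contained in N(w)
    have hcard : S.card ≤ (S ∩ Nbr E w).card
        + ((symmDiff (Nbr E m₀) (Nbr E m)).card + (symmDiff (Nbr E m) (Nbr E w)).card) := by
      have hsub : S ⊆ (S ∩ Nbr E w)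
          ∪ symmDiff (Nbr E m₀) (Nbr E m) ∪ symmDiff (Nbr E m) (Nbr E w) := by
        intro y hy
        have hym₀ : y ∈ Nbr E m₀ := NH_subset_Nbr hy
        by_cases hym : y ∈ Nbr E m
        · by_cases hyw : y ∈ Nbr E w
          · exact Finset.mem_union_left _
              (Finset.mem_union_left _ (Finset.mem_inter.2 ⟨hy, hyw⟩))
          · refine Finset.mem_union_right _ ?_
            rw [symmDiff_def]
            exact Finset.mem_union_left _ (Finset.mem_sdiff.2 ⟨hym, hyw⟩)
        · refine Finset.mem_union_left _ (Finset.mem_union_right _ ?_)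
          rw [symmDiff_def]
          exact Finset.mem_union_left _ (Finset.mem_sdiff.2 ⟨hym₀, hym⟩)
      calc S.card ≤ _ := Finset.card_le_card hsub
        _ ≤ (S ∩ Nbr E w ∪ symmDiff (Nbr E m₀) (Nbr E m)).card
            + (symmDiff (Nbr E m) (Nbr E w)).card := Finset.card_union_le _ _
        _ ≤ (S ∩ Nbr E w).card + (symmDiff (Nbr E m₀) (Nbr E m)).card
            + (symmDiff (Nbr E m) (Nbr E w)).card :=
          Nat.add_le_add_right (Finset.card_union_le _ _) _
        _ = _ := by ring
    have hcardR : (S.card : ℝ) ≤ ((S ∩ Nbr E w).card : ℝ) + (q1 + q2) := by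
      rw [hq1def, hq2def]
      exact_mod_cast hcard
    have hq1n : (0:ℝ) ≤ q1 := Nat.cast_nonneg _
    have hq2n : (0:ℝ) ≤ q2 := Nat.cast_nonneg _
    have hen : (0:ℝ) ≤ e := Nat.cast_nonneg _
    have hxn : (0:ℝ) ≤ ((S ∩ Nbr E w).card : ℝ) := Nat.cast_nonneg _
    have s3 : (1 - 2*β) * e ≤ d := by nlinarith
    have e5 : (1-2*β) * ((1-β) * (q1 + q2)) ≤ β*(3-2*β)*d := by
      nlinarith [hq1, hq2, s3]
    have hx : (1 - lam) * d - (q1 + q2) ≤ ((S ∩ Nbr E w).card : ℝ) := by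
      nlinarith [hScard_lb, hcardR]
    rw [hκdef]
    have hx2 : (1-β)*(1-2*β)*((1 - lam) * d - (q1 + q2))
        ≤ (1-β)*(1-2*β)*((S ∩ Nbr E w).card : ℝ) :=
      mul_le_mul_of_nonneg_left hx
        (mul_nonneg (by linarith : (0:ℝ) ≤ 1-β) (by linarith : (0:ℝ) ≤ 1-2*β))
    nlinarith [e5, hx2]
  -- sum the per-vertex bounds and double count
  set W : Finset V := Aset β lam E u with hWdef
  set Xn : ℕ := ∑ w ∈ W, (S ∩ Nbr E w).card with hXdef
  have hsum1 : (W.card : ℝ) * (κ * d) ≤ (1-β)*(1-2*β) * (Xn : ℝ) := by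
    have h1 : ∑ w ∈ W, (κ * d) ≤ ∑ w ∈ W, (1-β)*(1-2*β) * ((S ∩ Nbr E w).card : ℝ) :=
      Finset.sum_le_sum hkey
    rw [Finset.sum_const, nsmul_eq_mul] at h1
    rw [← Finset.mul_sum] at h1
    have h2 : ∑ w ∈ W, ((S ∩ Nbr E w).card : ℝ) = (Xn : ℝ) := by
      rw [hXdef]; push_cast; ring
    rwa [h2] at h1
  -- swap the double counting
  have hswap : Xn = ∑ y ∈ S, (W ∩ Nbr E y).card := by
    rw [hXdef]
    have h1 : ∀ w, (S ∩ Nbr E w).card = ∑ y ∈ S, if E w y then 1 else 0 := by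
      intro w
      have : S ∩ Nbr E w = S.filter (fun y => E w y) := by
        ext y; simp [mem_Nbr, Finset.mem_filter, Finset.mem_inter]
      rw [this, Finset.card_filter]
    have h2 : ∀ y, (W ∩ Nbr E y).card = ∑ w ∈ W, if E y w then 1 else 0 := by
      intro y
      have : W ∩ Nbr E y = W.filter (fun w => E y w) := by
        ext z; simp [mem_Nbr, Finset.mem_filter, Finset.mem_inter]
      rw [this, Finset.card_filter]
    calc ∑ w ∈ W, (S ∩ Nbr E w).card = ∑ w ∈ W, ∑ y ∈ S, if E w y then 1 else 0 := by
          exact Finset.sum_congr rfl (fun w _ => h1 w)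
      _ = ∑ y ∈ S, ∑ w ∈ W, if E w y then 1 else 0 := Finset.sum_comm
      _ = ∑ y ∈ S, ∑ w ∈ W, if E y w then 1 else 0 := by
          refine Finset.sum_congr rfl (fun y _ => Finset.sum_congr rfl (fun w _ => ?_))
          by_cases h : E w y
          · rw [if_pos h, if_pos (hsymm _ _ h)]
          · rw [if_neg h, if_neg (fun h' => h (hsymm _ _ h'))]
      _ = _ := Finset.sum_congr rfl (fun y _ => (h2 y).symm)
  -- the per-y upper bound
  have hY : ∀ y ∈ S, (1-β) * ((W ∩ Nbr E y).card : ℝ) ≤ 2*β*d := by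
    intro y hy
    have hEHy : EH β E m₀ y := mem_NH.1 hy
    have hq3 : (1 - β) * ((symmDiff (Nbr E y) (Nbr E m₀)).card : ℝ) ≤ β * d := by
      have h1 : ((symmDiff (Nbr E m₀) (Nbr E y)).card : ℝ) ≤ β * (Mdeg E m₀ y : ℝ) := hEHy.2
      have h2 : (1 - β) * (Mdeg E m₀ y : ℝ) ≤ d := EH_deg_lb hβ1 hEHy
      rw [symmDiff_comm]
      nlinarith [Nat.cast_nonneg (α := ℝ) (Mdeg E m₀ y)]
    have hsub : W ∩ Nbr E y ⊆ symmDiff (Nbr E y) (Nbr E m₀) ∪ symmDiff (Nbr E m₀) (Nbr E u) := by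
      intro z hz
      rcases Finset.mem_inter.1 hz with ⟨hzW, hzy⟩
      have hzu : z ∉ Nbr E u := by
        rw [hWdef, mem_Aset] at hzW
        rw [mem_Nbr]; exact hzW.1
      by_cases hzm : z ∈ Nbr E m₀
      · refine Finset.mem_union_right _ ?_
        rw [symmDiff_def]
        exact Finset.mem_union_left _ (Finset.mem_sdiff.2 ⟨hzm, hzu⟩)
      · refine Finset.mem_union_left _ ?_
        rw [symmDiff_def]
        exact Finset.mem_union_left _ (Finset.mem_sdiff.2 ⟨hzy, hzm⟩)
    have hcard2 : (W ∩ Nbr E y).card ≤ (symmDiff (Nbr E y) (Nbr E m₀)).card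
        + (symmDiff (Nbr E m₀) (Nbr E u)).card :=
      le_trans (Finset.card_le_card hsub) (Finset.card_union_le _ _)
    have hcard2R : ((W ∩ Nbr E y).card : ℝ) ≤ ((symmDiff (Nbr E y) (Nbr E m₀)).card : ℝ)
        + ((symmDiff (Nbr E m₀) (Nbr E u)).card : ℝ) := by exact_mod_cast hcard2
    nlinarith [hq3, hq4, hcard2R, Nat.cast_nonneg (α := ℝ) ((W ∩ Nbr E y).card)]
  have hsum2 : (1-β) * ((Xn : ℝ)) ≤ 2*β*d*d := by
    rw [hswap]
    have h1 : ∑ y ∈ S, (1-β) * ((W ∩ Nbr E y).card : ℝ) ≤ ∑ y ∈ S, 2*β*d :=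
      Finset.sum_le_sum hY
    rw [Finset.sum_const, nsmul_eq_mul, ← Finset.mul_sum] at h1
    have h2 : ∑ y ∈ S, ((W ∩ Nbr E y).card : ℝ) = ((∑ y ∈ S, (W ∩ Nbr E y).card : ℕ) : ℝ) := by
      push_cast; ring
    rw [h2] at h1
    calc (1-β) * ((∑ y ∈ S, (W ∩ Nbr E y).card : ℕ) : ℝ) ≤ (S.card : ℝ) * (2*β*d) := h1
      _ ≤ 2*β*d*d := by
          have := mul_le_mul_of_nonneg_right hScard_ub
            (by positivity : (0:ℝ) ≤ 2*β*d)
          linarith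
  -- combine
  obtain ⟨hκpos, hnum⟩ := num_ineq hβ0 hlam0 hβlam
  have h1β : (0:ℝ) < 1 - β := by linarith
  have h12β : (0:ℝ) < 1 - 2*β := by linarith
  have hstep : (W.card : ℝ) * (κ * d) ≤ (1-2*β) * (2*β*d*d) := by
    have h3 : (1-β) * ((W.card : ℝ) * (κ * d)) ≤ (1-β) * ((1-β)*(1-2*β) * (Xn : ℝ)) :=
      mul_le_mul_of_nonneg_left hsum1 h1β.le
    have h4 : (1-β)*(1-2*β) * ((1-β) * (Xn : ℝ)) ≤ (1-β)*(1-2*β) * (2*β*d*d) :=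
      mul_le_mul_of_nonneg_left hsum2 (by positivity)
    have h5 : (1-β) * ((W.card : ℝ) * (κ * d)) ≤ (1-β) * ((1-2*β) * (2*β*d*d)) := by
      nlinarith [h3, h4]
    exact le_of_mul_le_mul_left h5 h1β
  have hκd : (0:ℝ) < κ * d := by positivity
  have hfin : 5 * (W.card : ℝ) ≤ (1 - lam) * d := by
    have h6 : (5 * (W.card : ℝ)) * (κ * d) ≤ ((1-lam) * d) * (κ * d) := by
      have h8 : 5 * ((W.card : ℝ) * (κ * d)) ≤ 5 * ((1-2*β) * (2*β*d*d)) := by linarith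
      have h7 : 10*β*(1-2*β)*(d*d) ≤ ((1-lam) * κ)*(d*d) :=
        mul_le_mul_of_nonneg_right (by rw [hκdef]; exact hnum) (by positivity)
      nlinarith [h8, h7]
    exact le_of_mul_le_mul_right h6 hκd
  have hfin2 : (5 * W.card : ℝ) ≤ ((Kset β lam E u).card : ℝ) := by
    have hSle : (S.card : ℝ) ≤ ((Kset β lam E u).card : ℝ) := by
      exact_mod_cast Finset.card_le_card hSK
    push_cast
    linarith [hScard_lb, hfin, hSle]
  exact_mod_cast hfin2

end Aux2

/-- the cluster of `u` under a clustering `D` -/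
def Cset [Fintype V] {α : Type*} (D : V → α) (u : V) : Finset V :=
  Finset.univ.filter (fun v => D v = D u)

section Aux3

variable [Fintype V] {E : V → V → Prop} {β lam : ℝ} {α : Type*} {D : V → α}

lemma mem_Cset {u v : V} : v ∈ Cset D u ↔ D v = D u := by simp [Cset]

lemma costF_eq (hrefl : ∀ u, E u u) (u : V) :
    costC2 E (preCluster β lam E) (preCluster β lam E) u = (Aset β lam E u).card := by
  unfold costC2
  have h1 : (Finset.univ.filter (fun v => E u v ∧ preCluster β lam E u = preCluster β lam E v
      ∧ preCluster β lam E u ≠ preCluster β lam E v)) = (∅ : Finset V) := by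
    ext v; simp
  have h2 : (Finset.univ.filter (fun v => v ≠ u ∧ ¬ E u v ∧
      preCluster β lam E u = preCluster β lam E v)) = Aset β lam E u := by
    ext v
    simp only [Finset.mem_filter, Finset.mem_univ, true_and, mem_Aset]
    constructor
    · rintro ⟨h1, h2, h3⟩; exact ⟨h2, h3.symm⟩
    · rintro ⟨h1, h2⟩
      exact ⟨fun h => h1 (h ▸ hrefl u), h1, h2.symm⟩
  rw [h1, h2]; simp

lemma cost_lb1 (u : V) :
    ((Nbr E u ∩ Kset β lam E u) \ Cset D u).card ≤ costC2 E (preCluster β lam E) D u := by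
  unfold costC2
  have h1 : (Nbr E u ∩ Kset β lam E u) \ Cset D u =
      Finset.univ.filter (fun v => E u v ∧ preCluster β lam E u = preCluster β lam E v
        ∧ D u ≠ D v) := by
    ext v
    simp only [Finset.mem_sdiff, Finset.mem_inter, mem_Nbr, mem_Kset, mem_Cset,
      Finset.mem_filter, Finset.mem_univ, true_and]
    constructor
    · rintro ⟨⟨h1, h2⟩, h3⟩; exact ⟨h1, h2.symm, fun h => h3 h.symm⟩
    · rintro ⟨h1, h2, h3⟩; exact ⟨⟨h1, h2.symm⟩, fun h => h3 h.symm⟩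
  rw [h1]
  exact Nat.le_add_right _ _

lemma cost_lb2 (hrefl : ∀ u, E u u) (u : V) :
    (Aset β lam E u ∩ Cset D u).card ≤ costC2 E (preCluster β lam E) D u := by
  unfold costC2
  have h1 : Aset β lam E u ∩ Cset D u ⊆
      Finset.univ.filter (fun v => v ≠ u ∧ ¬ E u v ∧ D u = D v) := by
    intro v hv
    rcases Finset.mem_inter.1 hv with ⟨h1, h2⟩
    rw [mem_Aset] at h1
    rw [mem_Cset] at h2
    simp only [Finset.mem_filter, Finset.mem_univ, true_and]
    exact ⟨fun h => h1.1 (h ▸ hrefl u), h1.1, h2.symm⟩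
  calc (Aset β lam E u ∩ Cset D u).card ≤ _ := Finset.card_le_card h1
    _ ≤ _ := Nat.le_add_left _ _

/-- if the cluster of `u` does not contain a majority of its component, then the
pre-clustering cost of `u` is at most its `D`-cost -/
lemma good_case {u : V} (hdens : 5 * (Aset β lam E u).card ≤ (Kset β lam E u).card)
    (h2C : 2 * (Cset D u ∩ Kset β lam E u).card ≤ (Kset β lam E u).card) :
    (Aset β lam E u).card ≤ costC2 E (preCluster β lam E) D u := by
  have hsplit : (Kset β lam E u ∩ Nbr E u).card + (Aset β lam E u).card
      = (Kset β lam E u).card := by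
    rw [Aset_eq_sdiff]
    exact Finset.card_inter_add_card_sdiff _ _
  have hcov : (Kset β lam E u ∩ Nbr E u).card ≤
      ((Nbr E u ∩ Kset β lam E u) \ Cset D u).card + (Cset D u ∩ Kset β lam E u).card := by
    have hsub : Kset β lam E u ∩ Nbr E u ⊆
        ((Nbr E u ∩ Kset β lam E u) \ Cset D u) ∪ (Cset D u ∩ Kset β lam E u) := by
      intro v hv
      rcases Finset.mem_inter.1 hv with ⟨h1, h2⟩
      by_cases hC : v ∈ Cset D u
      · exact Finset.mem_union_right _ (Finset.mem_inter.2 ⟨hC, h1⟩)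
      · exact Finset.mem_union_left _
          (Finset.mem_sdiff.2 ⟨Finset.mem_inter.2 ⟨h2, h1⟩, hC⟩)
    exact le_trans (Finset.card_le_card hsub) (Finset.card_union_le _ _)
  have hc1 := cost_lb1 (β := β) (lam := lam) (D := D) (E := E) u
  omega

lemma Kset_eq_of_mem {u : V} {c : (Gtilde β lam E).ConnectedComponent}
    (h : preCluster β lam E u = c) :
    Kset β lam E u = Finset.univ.filter (fun v => preCluster β lam E v = c) := by
  ext v; simp [Kset, h]

lemma mem_Aset_symm (hsymm : ∀ u v, E u v → E v u) {u w : V} :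
    w ∈ Aset β lam E u ↔ u ∈ Aset β lam E w := by
  rw [mem_Aset, mem_Aset]
  constructor
  · rintro ⟨h1, h2⟩; exact ⟨fun h => h1 (hsymm _ _ h), h2.symm⟩
  · rintro ⟨h1, h2⟩; exact ⟨fun h => h1 (hsymm _ _ h), h2.symm⟩

set_option maxHeartbeats 1000000 in
/-- the per-component charging argument -/
lemma percomp (hsymm : ∀ u v, E u v → E v u) (hrefl : ∀ u, E u u)
    (hβ0 : 0 < β) (hlam0 : 0 < lam) (hlam1 : lam < 1) (hβlam : 8 * β + lam ≤ 3 / 8)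
    {α : Type*} (D : V → α) (c : (Gtilde β lam E).ConnectedComponent) (B : Finset V)
    (hB : ∀ u ∈ B, preCluster β lam E u = c ∧
      costC2 E (preCluster β lam E) D u < (Aset β lam E u).card) :
    ∃ U : Finset V, U ⊆ Finset.univ.filter (fun v => preCluster β lam E v = c) ∧
      U.card ≤ B.card ∧
      3 * ∑ u ∈ B, (Aset β lam E u).card ≤ 7 * ∑ w ∈ U, costC2 E (preCluster β lam E) D w := by
  classical
  rcases B.eq_empty_or_nonempty with hBe | ⟨u₀, hu₀⟩
  · exact ⟨∅, Finset.empty_subset _, by simp, by simp [hBe]⟩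
  obtain ⟨hu₀c, hu₀bad⟩ := hB u₀ hu₀
  set K : Finset V := Finset.univ.filter (fun v => preCluster β lam E v = c) with hKdef
  have hKeq : ∀ u : V, preCluster β lam E u = c → Kset β lam E u = K :=
    fun u hu => Kset_eq_of_mem hu
  have hdensK : ∀ x : V, preCluster β lam E x = c → 5 * (Aset β lam E x).card ≤ K.card := by
    intro x hx
    rw [← hKeq x hx]
    exact dens hsymm hrefl hβ0 hlam0 hlam1 hβlam x
  -- all bad vertices have majority clusters
  have maj : ∀ u ∈ B, K.card < 2 * (Cset D u ∩ K).card := by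
    intro u hu
    obtain ⟨huc, hubad⟩ := hB u hu
    by_contra hcon
    push_neg at hcon
    have := good_case (E := E) (D := D)
      (by rw [hKeq u huc]; exact hdensK u huc)
      (by rw [hKeq u huc]; omega)
    omega
  -- all bad vertices lie in the same cluster
  have hδ : ∀ u ∈ B, D u = D u₀ := by
    intro u hu
    have h1 := maj u hu
    have h2 := maj u₀ hu₀
    have hsub : (Cset D u ∩ K) ∪ (Cset D u₀ ∩ K) ⊆ K :=
      Finset.union_subset Finset.inter_subset_right Finset.inter_subset_right
    have h3 := Finset.card_inter_add_card_union (Cset D u ∩ K) (Cset D u₀ ∩ K)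
    have h4 : ((Cset D u ∩ K) ∪ (Cset D u₀ ∩ K)).card ≤ K.card := Finset.card_le_card hsub
    have h5 : 0 < ((Cset D u ∩ K) ∩ (Cset D u₀ ∩ K)).card := by omega
    obtain ⟨z, hz⟩ := Finset.card_pos.1 h5
    rcases Finset.mem_inter.1 hz with ⟨hz1, hz2⟩
    have e1 : D z = D u := mem_Cset.1 (Finset.mem_inter.1 hz1).1
    have e2 : D z = D u₀ := mem_Cset.1 (Finset.mem_inter.1 hz2).1
    rw [← e1, e2]
  set R : Finset V := K.filter (fun w => D w ≠ D u₀) with hRdef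
  have hRK : R ⊆ K := Finset.filter_subset _ _
  have hRc : ∀ w ∈ R, preCluster β lam E w = c := by
    intro w hw
    have := hRK hw
    rw [hKdef] at this
    exact (Finset.mem_filter.1 this).2
  -- the witness inequality
  have hwit : ∀ w ∈ R, 3 * K.card + 5 ≤ 10 * costC2 E (preCluster β lam E) D w := by
    intro w hw
    have hwc := hRc w hw
    have hwD : D w ≠ D u₀ := (Finset.mem_filter.1 hw).2
    -- (i)
    have hsplit : (K ∩ Nbr E w).card + (Aset β lam E w).card = K.card := by
      have : Aset β lam E w = K \ Nbr E w := by
        rw [Aset_eq_sdiff, hKeq w hwc]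
      rw [this]
      exact Finset.card_inter_add_card_sdiff _ _
    have hcov : (K ∩ Nbr E w).card ≤
        ((Nbr E w ∩ K) \ Cset D w).card + (Cset D w ∩ K).card := by
      have hsub : K ∩ Nbr E w ⊆ ((Nbr E w ∩ K) \ Cset D w) ∪ (Cset D w ∩ K) := by
        intro v hv
        rcases Finset.mem_inter.1 hv with ⟨h1, h2⟩
        by_cases hC : v ∈ Cset D w
        · exact Finset.mem_union_right _ (Finset.mem_inter.2 ⟨hC, h1⟩)
        · exact Finset.mem_union_left _
            (Finset.mem_sdiff.2 ⟨Finset.mem_inter.2 ⟨h2, h1⟩, hC⟩)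
      exact le_trans (Finset.card_le_card hsub) (Finset.card_union_le _ _)
    have hc1 : ((Nbr E w ∩ K) \ Cset D w).card ≤ costC2 E (preCluster β lam E) D w := by
      rw [← hKeq w hwc]
      exact cost_lb1 w
    -- (ii)
    have hdisj : Disjoint (Cset D w ∩ K) (Cset D u₀ ∩ K) := by
      rw [Finset.disjoint_left]
      intro z hz1 hz2
      have e1 : D z = D w := mem_Cset.1 (Finset.mem_inter.1 hz1).1
      have e2 : D z = D u₀ := mem_Cset.1 (Finset.mem_inter.1 hz2).1
      exact hwD (e1 ▸ e2)
    have hii : (Cset D w ∩ K).card + (Cset D u₀ ∩ K).card ≤ K.card := by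
      rw [← Finset.card_union_of_disjoint hdisj]
      exact Finset.card_le_card
        (Finset.union_subset Finset.inter_subset_right Finset.inter_subset_right)
    -- (iii)
    have hiii := maj u₀ hu₀
    -- (iv)
    have hiv : 5 * (Aset β lam E w).card ≤ K.card := hdensK w hwc
    omega
  have hpt : ∀ w ∈ R, 3 * (Aset β lam E w).card ≤ 2 * costC2 E (preCluster β lam E) D w := by
    intro w hw
    have h1 := hwit w hw
    have h2 := hdensK w (hRc w hw)
    omega
  set t := B.card with htdef
  set r := R.card with hrdef
  rcases le_or_gt t r with htr | hrt
  · -- few bad vertices: witnesses only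
    obtain ⟨Wc, hWsub, hWcard⟩ := Finset.exists_subset_card_eq htr
    have hWfil : Wc ⊆ Finset.univ.filter (fun v => preCluster β lam E v = c) := by
      rw [← hKdef]; exact le_trans hWsub hRK
    refine ⟨Wc, hWfil, le_of_eq hWcard, ?_⟩
    have h1 : 15 * ∑ u ∈ B, (Aset β lam E u).card ≤ t * (3 * K.card) := by
      have h1' : ∑ u ∈ B, 15 * (Aset β lam E u).card ≤ ∑ u ∈ B, 3 * K.card :=
        Finset.sum_le_sum (fun u hu => by
          have := hdensK u (hB u hu).1; omega)
      rw [Finset.sum_const, smul_eq_mul, ← Finset.mul_sum] at h1'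
      exact h1'
    have h2 : t * (3 * K.card + 5) ≤ 10 * ∑ w ∈ Wc, costC2 E (preCluster β lam E) D w := by
      have h2' : ∑ w ∈ Wc, (3 * K.card + 5) ≤ ∑ w ∈ Wc, 10 * costC2 E (preCluster β lam E) D w :=
        Finset.sum_le_sum (fun w hw => hwit w (hWsub hw))
      rw [Finset.sum_const, smul_eq_mul, ← Finset.mul_sum, hWcard] at h2'
      exact h2'
    have h3 : t * (3 * K.card) ≤ t * (3 * K.card + 5) :=
      Nat.mul_le_mul_left _ (by omega)
    have h4 : 15 * ∑ u ∈ B, (Aset β lam E u).card ≤ 10 * ∑ w ∈ Wc, costC2 E (preCluster β lam E) D w := le_trans h1 (le_trans h3 h2)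
    omega
  · -- many bad vertices: witnesses and surviving bad vertices
    obtain ⟨B₂, hB₂sub, hB₂card⟩ := Finset.exists_subset_card_eq
      (show t - r ≤ B.card by omega)
    set Dropped := B \ B₂ with hDdef
    have hDcard : Dropped.card = r := by
      rw [hDdef, Finset.card_sdiff_of_subset hB₂sub, hB₂card]; omega
    have hBsubfil : B ⊆ Finset.univ.filter (fun v => preCluster β lam E v = c) := by
      intro u hu
      simp only [Finset.mem_filter, Finset.mem_univ, true_and]
      exact (hB u hu).1
    have hRfil : R ⊆ Finset.univ.filter (fun v => preCluster β lam E v = c) := by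
      rw [← hKdef]; exact hRK
    refine ⟨B₂ ∪ R, Finset.union_subset (le_trans hB₂sub hBsubfil) hRfil, ?_, ?_⟩
    · calc (B₂ ∪ R).card ≤ B₂.card + R.card := Finset.card_union_le _ _
        _ = (t - r) + r := by rw [hB₂card, hrdef]
        _ ≤ t := by omega
    · -- dropped bad vertices are paid by witnesses
      have hα : 3 * ∑ u ∈ Dropped, (Aset β lam E u).card ≤ 2 * ∑ w ∈ R, costC2 E (preCluster β lam E) D w := by
        have h1 : 15 * ∑ u ∈ Dropped, (Aset β lam E u).card ≤ r * (3 * K.card) := by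
          have h1' : ∑ u ∈ Dropped, 15 * (Aset β lam E u).card ≤ ∑ u ∈ Dropped, 3 * K.card :=
            Finset.sum_le_sum (fun u hu => by
              have := hdensK u (hB u (Finset.mem_sdiff.1 hu).1).1; omega)
          rw [Finset.sum_const, smul_eq_mul, ← Finset.mul_sum, hDcard] at h1'
          exact h1'
        have h2 : r * (3 * K.card + 5) ≤ 10 * ∑ w ∈ R, costC2 E (preCluster β lam E) D w := by
          have h2' : ∑ w ∈ R, (3 * K.card + 5) ≤ ∑ w ∈ R, 10 * costC2 E (preCluster β lam E) D w :=
            Finset.sum_le_sum (fun w hw => hwit w hw)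
          rw [Finset.sum_const, smul_eq_mul, ← Finset.mul_sum, ← hrdef] at h2'
          exact h2'
        have h3 : r * (3 * K.card) ≤ r * (3 * K.card + 5) :=
          Nat.mul_le_mul_left _ (by omega)
        have h4 := le_trans h1 (le_trans h3 h2)
        omega
      -- surviving bad vertices
      have hβ2 : ∀ u ∈ B₂, (Aset β lam E u).card ≤ costC2 E (preCluster β lam E) D u + (Aset β lam E u ∩ R).card := by
        intro u hu
        have huB := hB₂sub hu
        obtain ⟨huc, hubad⟩ := hB u huB
        have hAK : Aset β lam E u ⊆ K := by
          intro v hv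
          rw [mem_Aset] at hv
          rw [hKdef]
          simp only [Finset.mem_filter, Finset.mem_univ, true_and]
          rw [hv.2, huc]
        have hcover : Aset β lam E u ⊆ (Aset β lam E u ∩ Cset D u₀) ∪ (Aset β lam E u ∩ R) := by
          intro v hv
          by_cases hC : D v = D u₀
          · exact Finset.mem_union_left _ (Finset.mem_inter.2 ⟨hv, mem_Cset.2 hC⟩)
          · refine Finset.mem_union_right _ (Finset.mem_inter.2 ⟨hv, ?_⟩)
            rw [hRdef]
            exact Finset.mem_filter.2 ⟨hAK hv, hC⟩
        have hCeq : Cset D u₀ = Cset D u := by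
          unfold Cset
          rw [hδ u huB]
        have hlb2 : (Aset β lam E u ∩ Cset D u).card ≤ costC2 E (preCluster β lam E) D u := by
          exact cost_lb2 hrefl u
        calc (Aset β lam E u).card ≤ ((Aset β lam E u ∩ Cset D u₀) ∪ (Aset β lam E u ∩ R)).card :=
              Finset.card_le_card hcover
          _ ≤ (Aset β lam E u ∩ Cset D u₀).card + (Aset β lam E u ∩ R).card :=
              Finset.card_union_le _ _
          _ ≤ costC2 E (preCluster β lam E) D u + (Aset β lam E u ∩ R).card := by
              rw [hCeq]; omega
      -- double counting of the negative pairs hitting R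
      have hγ : ∑ u ∈ B₂, (Aset β lam E u ∩ R).card ≤ ∑ w ∈ R, (Aset β lam E w).card := by
        have e1 : ∀ u : V, (Aset β lam E u ∩ R).card
            = ∑ w ∈ R, if w ∈ Aset β lam E u then 1 else 0 := by
          intro u
          have : Aset β lam E u ∩ R = R.filter (fun w => w ∈ Aset β lam E u) := by
            ext w
            simp only [Finset.mem_inter, Finset.mem_filter]
            tauto
          rw [this, Finset.card_filter]
        calc ∑ u ∈ B₂, (Aset β lam E u ∩ R).card
            = ∑ u ∈ B₂, ∑ w ∈ R, if w ∈ Aset β lam E u then 1 else 0 :=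
              Finset.sum_congr rfl (fun u _ => e1 u)
          _ = ∑ w ∈ R, ∑ u ∈ B₂, if w ∈ Aset β lam E u then 1 else 0 := Finset.sum_comm
          _ = ∑ w ∈ R, ∑ u ∈ B₂, if u ∈ Aset β lam E w then 1 else 0 := by
              refine Finset.sum_congr rfl (fun w _ => Finset.sum_congr rfl (fun u _ => ?_))
              by_cases h : w ∈ Aset β lam E u
              · rw [if_pos h, if_pos ((mem_Aset_symm hsymm).1 h)]
              · rw [if_neg h, if_neg (fun h' => h ((mem_Aset_symm hsymm).2 h'))]
          _ ≤ ∑ w ∈ R, (Aset β lam E w).card := by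
              refine Finset.sum_le_sum (fun w _ => ?_)
              rw [← Finset.card_filter]
              exact Finset.card_le_card (fun x hx => (Finset.mem_filter.1 hx).2)
      have hptR : 3 * ∑ w ∈ R, (Aset β lam E w).card ≤ 2 * ∑ w ∈ R, costC2 E (preCluster β lam E) D w := by
        have h1 : ∑ w ∈ R, 3 * (Aset β lam E w).card ≤ ∑ w ∈ R, 2 * costC2 E (preCluster β lam E) D w := Finset.sum_le_sum hpt
        rw [← Finset.mul_sum, ← Finset.mul_sum] at h1
        exact h1
      have hm1 : ∑ u ∈ B₂, (Aset β lam E u).card ≤ ∑ u ∈ B₂, costC2 E (preCluster β lam E) D u + ∑ u ∈ B₂, (Aset β lam E u ∩ R).card := by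
        have h1 : ∑ u ∈ B₂, (Aset β lam E u).card ≤ ∑ u ∈ B₂, (costC2 E (preCluster β lam E) D u + (Aset β lam E u ∩ R).card) :=
          Finset.sum_le_sum hβ2
        rwa [Finset.sum_add_distrib] at h1
      have hsumB : ∑ u ∈ Dropped, (Aset β lam E u).card + ∑ u ∈ B₂, (Aset β lam E u).card = ∑ u ∈ B, (Aset β lam E u).card :=
        Finset.sum_sdiff hB₂sub
      have hdisjBR : Disjoint B₂ R := by
        rw [Finset.disjoint_left]
        intro u hu huR
        exact (Finset.mem_filter.1 huR).2 (hδ u (hB₂sub hu))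
      have hsumU : ∑ w ∈ B₂ ∪ R, costC2 E (preCluster β lam E) D w = ∑ w ∈ B₂, costC2 E (preCluster β lam E) D w + ∑ w ∈ R, costC2 E (preCluster β lam E) D w :=
        Finset.sum_union hdisjBR
      omega

end Aux3


set_option maxHeartbeats 1000000 in
/-- Let `F` be the pre-clustering (connected components of `G̃`) and
`G₂` the instance obtained from `G` by neutralising every `+`edge cut by `F`. If `𝒞*`
minimises `cost^k_·(G₂)` over all clusterings, then `cost^k_F(G₂) ≤ 7·cost^k_{𝒞*}(G₂)`. -/
theorem preCluster_seven_approx_G2 [Fintype V] (E : V → V → Prop)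
    (hsymm : ∀ u v, E u v → E v u) (hrefl : ∀ u, E u u)
    (β lam : ℝ) (hβ0 : 0 < β) (hβ1 : β < 1) (hlam0 : 0 < lam) (hlam1 : lam < 1)
    (hβlam : 8 * β + lam ≤ 3 / 8)
    (k : ℕ) (hk1 : 1 ≤ k) (hk2 : k ≤ Fintype.card V)
    (Cstar : V → ℕ)
    (hopt : ∀ D : V → ℕ,
      costTopK2 E (preCluster β lam E) Cstar k ≤ costTopK2 E (preCluster β lam E) D k) :
    costTopK2 E (preCluster β lam E) (preCluster β lam E) k
      ≤ 7 * costTopK2 E (preCluster β lam E) Cstar k := by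
  classical
  refine Finset.sup_le ?_
  intro T hT
  obtain ⟨hTsub, hTcard⟩ := Finset.mem_powersetCard.1 hT
  have hTf : ∑ u ∈ T, costC2 E (preCluster β lam E) (preCluster β lam E) u
      = ∑ u ∈ T, (Aset β lam E u).card :=
    Finset.sum_congr rfl (fun u _ => costF_eq hrefl u)
  rw [hTf]
  set B := T.filter (fun u => costC2 E (preCluster β lam E) Cstar u < (Aset β lam E u).card)
    with hBdef
  set Gd := T.filter
    (fun u => ¬ (costC2 E (preCluster β lam E) Cstar u < (Aset β lam E u).card)) with hGdef
  have hsplitT : ∑ u ∈ B, (Aset β lam E u).card + ∑ u ∈ Gd, (Aset β lam E u).card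
      = ∑ u ∈ T, (Aset β lam E u).card := by
    rw [hBdef, hGdef]
    exact Finset.sum_filter_add_sum_filter_not T _ _
  have hGd : ∑ u ∈ Gd, (Aset β lam E u).card
      ≤ ∑ u ∈ Gd, costC2 E (preCluster β lam E) Cstar u :=
    Finset.sum_le_sum (fun u hu => not_lt.1 (Finset.mem_filter.1 hu).2)
  -- per-component charging
  have hex : ∀ c : (Gtilde β lam E).ConnectedComponent,
      ∃ U : Finset V, U ⊆ Finset.univ.filter (fun v => preCluster β lam E v = c) ∧
        U.card ≤ (B.filter (fun u => preCluster β lam E u = c)).card ∧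
        3 * ∑ u ∈ B.filter (fun u => preCluster β lam E u = c), (Aset β lam E u).card
          ≤ 7 * ∑ w ∈ U, costC2 E (preCluster β lam E) Cstar w := by
    intro c
    refine percomp hsymm hrefl hβ0 hlam0 hlam1 hβlam Cstar c _ ?_
    intro u hu
    exact ⟨(Finset.mem_filter.1 hu).2,
      (Finset.mem_filter.1 (Finset.mem_filter.1 hu).1).2⟩
  choose Us hUsub hUcard hUsum using hex
  set cs := B.image (preCluster β lam E) with hcsdef
  set BU := cs.biUnion Us with hBUdef
  have hdisj : (cs : Set (Gtilde β lam E).ConnectedComponent).PairwiseDisjoint Us := by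
    intro c1 _ c2 _ hne
    refine Finset.disjoint_left.2 (fun x hx1 hx2 => ?_)
    have e1 := (Finset.mem_filter.1 (hUsub c1 hx1)).2
    have e2 := (Finset.mem_filter.1 (hUsub c2 hx2)).2
    exact hne (by rw [← e1, ← e2])
  have hmaps : ∀ u ∈ B, preCluster β lam E u ∈ cs := fun u hu =>
    Finset.mem_image_of_mem _ hu
  have hfibB : ∑ c ∈ cs, ∑ u ∈ B.filter (fun u => preCluster β lam E u = c),
      (Aset β lam E u).card = ∑ u ∈ B, (Aset β lam E u).card :=
    Finset.sum_fiberwise_of_maps_to hmaps _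
  have hfibBcard : B.card = ∑ c ∈ cs, (B.filter (fun u => preCluster β lam E u = c)).card :=
    Finset.card_eq_sum_card_fiberwise hmaps
  have hBUsum : ∑ w ∈ BU, costC2 E (preCluster β lam E) Cstar w
      = ∑ c ∈ cs, ∑ w ∈ Us c, costC2 E (preCluster β lam E) Cstar w :=
    Finset.sum_biUnion hdisj
  have hBUcard : BU.card ≤ B.card := by
    calc BU.card ≤ ∑ c ∈ cs, (Us c).card := Finset.card_biUnion_le
      _ ≤ ∑ c ∈ cs, (B.filter (fun u => preCluster β lam E u = c)).card :=
        Finset.sum_le_sum (fun c _ => hUcard c)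
      _ = B.card := hfibBcard.symm
  have hBbound : 3 * ∑ u ∈ B, (Aset β lam E u).card
      ≤ 7 * ∑ w ∈ BU, costC2 E (preCluster β lam E) Cstar w := by
    rw [← hfibB, hBUsum, Finset.mul_sum, Finset.mul_sum]
    exact Finset.sum_le_sum (fun c _ => hUsum c)
  set U := Gd ∪ BU with hUdef
  have hGdB : B.card + Gd.card = T.card := by
    rw [hBdef, hGdef]
    exact Finset.card_filter_add_card_filter_not _
  have hUcard2 : U.card ≤ k := by
    calc U.card ≤ Gd.card + BU.card := Finset.card_union_le _ _
      _ ≤ Gd.card + B.card := by omega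
      _ = T.card := by omega
      _ = k := hTcard
  obtain ⟨U', hUU', hU'sub, hU'card⟩ := Finset.exists_subsuperset_card_eq
    (Finset.subset_univ U) hUcard2 (by rw [Finset.card_univ]; exact hk2)
  have hle1 : ∑ w ∈ U, costC2 E (preCluster β lam E) Cstar w
      ≤ ∑ w ∈ U', costC2 E (preCluster β lam E) Cstar w :=
    Finset.sum_le_sum_of_subset hUU'
  have hfin : ∑ w ∈ U', costC2 E (preCluster β lam E) Cstar w
      ≤ costTopK2 E (preCluster β lam E) Cstar k := by
    rw [costTopK2]
    exact Finset.le_sup (f := fun T => ∑ u ∈ T, costC2 E (preCluster β lam E) Cstar u)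
      (Finset.mem_powersetCard.2 ⟨hU'sub, hU'card⟩)
  have hGdU : ∑ w ∈ Gd, costC2 E (preCluster β lam E) Cstar w
      ≤ ∑ w ∈ U, costC2 E (preCluster β lam E) Cstar w :=
    Finset.sum_le_sum_of_subset Finset.subset_union_left
  have hBUU : ∑ w ∈ BU, costC2 E (preCluster β lam E) Cstar w
      ≤ ∑ w ∈ U, costC2 E (preCluster β lam E) Cstar w :=
    Finset.sum_le_sum_of_subset Finset.subset_union_right
  omega

end
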